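/- With M_n = C_n ⊕ M_0 and M'_n = P(C_n, M_0) ⊕ S as above, the characteristic polynomials coincide: χ_{M_n}(t) = χ_{M'_n}(t), i.e., T_{M_n}(1-t, 0) = T_{M'_n}(1-t, 0). -/

import Mathlib

open MvPolynomial Classical
open scoped Matroid

variable {α β : Type*}

/-- The rank of a set in a matroid: the largest cardinality of an independent subset. -/
noncomputable def Matroid.mrank (M : Matroid α) (X : Set α) : ℕ :=
  sSup {n | ∃ I, M.Indep I ∧ I ⊆ X ∧ I.ncard = n}

/-- The Tutte polynomial (corank–nullity sum) of a matroid on a finite type,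
as a polynomial in two variables `X 0` and `X 1`. -/
noncomputable def Matroid.tutte [Fintype α] (M : Matroid α) : MvPolynomial (Fin 2) ℤ :=
  ∑ A ∈ Finset.univ.filter (fun A : Finset α => (A : Set α) ⊆ M.E),
    (X 0 - 1) ^ (M.mrank M.E - M.mrank (A : Set α)) *
      (X 1 - 1) ^ (A.card - M.mrank (A : Set α))

/-- A circuit: a minimal dependent subset of the ground set. -/
def Matroid.IsCirc (M : Matroid α) (C : Set α) : Prop :=
  C ⊆ M.E ∧ ¬ M.Indep C ∧ ∀ D ⊂ C, M.Indep D

/-- Deletion of a set of elements. -/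
def Matroid.del (M : Matroid α) (D : Set α) : Matroid α := M ↾ (M.E \ D)

/-- Contraction of a set of elements, via the dual. -/
def Matroid.con (M : Matroid α) (C : Set α) : Matroid α := (M✶ ↾ (M✶.E \ C))✶

/-- A coloop (isthmus): an element of every base. -/
def Matroid.IsColoopElt (M : Matroid α) (e : α) : Prop := ∀ B, M.IsBase B → e ∈ B

/-- A simple matroid: every set of at most two elements of the ground set is independent. -/
def Matroid.IsSimple (M : Matroid α) : Prop := ∀ X ⊆ M.E, X.ncard ≤ 2 → M.Indep X

/-- A connected matroid: any two distinct elements lie on a common circuit. -/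
def Matroid.IsConnected (M : Matroid α) : Prop :=
  M.E.Nonempty ∧ ∀ e ∈ M.E, ∀ f ∈ M.E, e = f ∨ ∃ C, M.IsCirc C ∧ e ∈ C ∧ f ∈ C



/-! ### Auxiliary lemmas -/

namespace Matroid
variable {M : Matroid α}

lemma mrank_bdd [Fintype α] (M : Matroid α) (X : Set α) :
    BddAbove {n | ∃ I, M.Indep I ∧ I ⊆ X ∧ I.ncard = n} := by
  refine ⟨Fintype.card α, fun n hn => ?_⟩
  obtain ⟨I, -, -, rfl⟩ := hn
  simpa [Set.ncard_univ] using Set.ncard_le_ncard (Set.subset_univ I) Set.finite_univ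

lemma ncard_le_mrank [Fintype α] {I X : Set α} (hI : M.Indep I) (hIX : I ⊆ X) :
    I.ncard ≤ M.mrank X :=
  le_csSup (M.mrank_bdd X) ⟨I, hI, hIX, rfl⟩

lemma exists_mrank [Fintype α] (M : Matroid α) (X : Set α) :
    ∃ I, M.Indep I ∧ I ⊆ X ∧ I.ncard = M.mrank X :=
  Nat.sSup_mem (s := {n | ∃ I, M.Indep I ∧ I ⊆ X ∧ I.ncard = n})
    ⟨0, ∅, M.empty_indep, Set.empty_subset X, Set.ncard_empty α⟩ (M.mrank_bdd X)

lemma mrank_le [Fintype α] {X : Set α} {m : ℕ}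
    (h : ∀ I, M.Indep I → I ⊆ X → I.ncard ≤ m) : M.mrank X ≤ m := by
  obtain ⟨I, hI, hIX, hc⟩ := M.exists_mrank X
  exact hc ▸ h I hI hIX

lemma mrank_mono [Fintype α] {X Y : Set α} (h : X ⊆ Y) : M.mrank X ≤ M.mrank Y :=
  mrank_le fun _ hI hIX => ncard_le_mrank hI (hIX.trans h)

lemma mrank_le_ncard [Fintype α] (M : Matroid α) (X : Set α) : M.mrank X ≤ X.ncard :=
  mrank_le fun _ _ hIX => Set.ncard_le_ncard hIX (Set.toFinite X)

lemma Indep.mrank_eq [Fintype α] {X : Set α} (hX : M.Indep X) : M.mrank X = X.ncard :=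
  le_antisymm (M.mrank_le_ncard X) (ncard_le_mrank hX subset_rfl)

lemma indep_iff_circuit [Fintype α] {I : Set α} :
    M.Indep I ↔ I ⊆ M.E ∧ ∀ C, M.IsCirc C → ¬ C ⊆ I := by
  constructor
  · exact fun hI => ⟨hI.subset_ground, fun C hC hCI => hC.2.1 (hI.subset hCI)⟩
  rintro ⟨hIE, hC⟩
  by_contra hI
  have hne : (Finset.univ.filter
      (fun D : Finset α => (D : Set α) ⊆ I ∧ ¬ M.Indep (D : Set α))).Nonempty := by
    refine ⟨I.toFinset, ?_⟩
    simp only [Finset.mem_filter, Finset.mem_univ, true_and, Set.coe_toFinset]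
    exact ⟨subset_rfl, hI⟩
  obtain ⟨D, hDmem, hDmin⟩ := Finset.exists_min_image _ Finset.card hne
  simp only [Finset.mem_filter, Finset.mem_univ, true_and] at hDmem
  refine hC (D : Set α) ⟨hDmem.1.trans hIE, hDmem.2, fun D' hD' => ?_⟩ hDmem.1
  by_contra hD'i
  have hfin : D'.Finite := (Set.toFinite _)
  have hsub : hfin.toFinset ⊂ D := by
    rw [← Finset.coe_ssubset, Set.Finite.coe_toFinset]
    exact hD'
  have := hDmin hfin.toFinset (by
    simp only [Finset.mem_filter, Finset.mem_univ, true_and, Set.Finite.coe_toFinset]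
    exact ⟨(subset_of_ssubset hD').trans hDmem.1, hD'i⟩)
  exact absurd this (not_le.mpr (Finset.card_lt_card hsub))

lemma coe_disjSum (s : Finset α) (t : Finset β) :
    ((s.disjSum t : Finset (α ⊕ β)) : Set (α ⊕ β)) = Sum.inl '' ↑s ∪ Sum.inr '' ↑t := by
  ext (x | x) <;> simp

lemma mrank_sum [Fintype α] [Fintype β] (M : Matroid α) (N : Matroid β) (X : Set α) (Y : Set β) :
    (M.sum N).mrank (Sum.inl '' X ∪ Sum.inr '' Y) = M.mrank X + N.mrank Y := by
  apply le_antisymm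
  · refine mrank_le fun I hI hIX => ?_
    rw [sum_indep_iff] at hI
    have hrep : I = Sum.inl '' (Sum.inl ⁻¹' I) ∪ Sum.inr '' (Sum.inr ⁻¹' I) := by
      ext (x | x) <;> simp
    have h1 : Sum.inl ⁻¹' I ⊆ X := by
      intro x hx
      rcases hIX hx with h | h
      · obtain ⟨y, hy, hyx⟩ := h; obtain rfl : y = x := Sum.inl.inj hyx; exact hy
      · obtain ⟨y, -, hyx⟩ := h; exact absurd hyx (by simp)
    have h2 : Sum.inr ⁻¹' I ⊆ Y := by
      intro x hx
      rcases hIX hx with h | h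
      · obtain ⟨y, -, hyx⟩ := h; exact absurd hyx (by simp)
      · obtain ⟨y, hy, hyx⟩ := h; obtain rfl : y = x := Sum.inr.inj hyx; exact hy
    calc I.ncard = (Sum.inl '' (Sum.inl ⁻¹' I) ∪ Sum.inr '' (Sum.inr ⁻¹' I)).ncard := by
          rw [← hrep]
      _ = (Sum.inl '' (Sum.inl ⁻¹' I)).ncard + (Sum.inr '' (Sum.inr ⁻¹' I)).ncard := by
          refine Set.ncard_union_eq ?_ (Set.toFinite _) (Set.toFinite _)
          simp [Set.disjoint_left]
      _ = (Sum.inl ⁻¹' I).ncard + (Sum.inr ⁻¹' I).ncard := by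
          rw [Set.ncard_image_of_injective _ Sum.inl_injective,
            Set.ncard_image_of_injective _ Sum.inr_injective]
      _ ≤ M.mrank X + N.mrank Y :=
          Nat.add_le_add (ncard_le_mrank hI.1 h1) (ncard_le_mrank hI.2 h2)
  · obtain ⟨I1, hI1, hI1X, hc1⟩ := M.exists_mrank X
    obtain ⟨I2, hI2, hI2Y, hc2⟩ := N.exists_mrank Y
    have hind : (M.sum N).Indep (Sum.inl '' I1 ∪ Sum.inr '' I2) := by
      rw [sum_indep_iff]
      constructor
      · have : Sum.inl ⁻¹' (Sum.inl '' I1 ∪ Sum.inr '' I2) = I1 := by ext x; simp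
        rwa [this]
      · have : Sum.inr ⁻¹' (Sum.inl '' I1 ∪ Sum.inr '' I2) = I2 := by ext x; simp
        rwa [this]
    have hsub : Sum.inl '' I1 ∪ Sum.inr '' I2 ⊆ Sum.inl '' X ∪ Sum.inr '' Y :=
      Set.union_subset_union (Set.image_mono hI1X) (Set.image_mono hI2Y)
    have := ncard_le_mrank hind hsub
    rwa [Set.ncard_union_eq (by simp [Set.disjoint_left]) (Set.toFinite _) (Set.toFinite _),
      Set.ncard_image_of_injective _ Sum.inl_injective,
      Set.ncard_image_of_injective _ Sum.inr_injective, hc1, hc2] at this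

lemma tutte_sum [Fintype α] [Fintype β] (M : Matroid α) (N : Matroid β) :
    (M.sum N).tutte = M.tutte * N.tutte := by
  rw [Matroid.tutte, Matroid.tutte, Matroid.tutte, Finset.sum_mul_sum, ← Finset.sum_product']
  refine Finset.sum_nbij' (fun A => (A.toLeft, A.toRight)) (fun p => p.1.disjSum p.2)
    ?_ ?_ ?_ ?_ ?_
  · intro A hA
    simp only [Finset.mem_filter, Finset.mem_univ, true_and, sum_ground] at hA
    simp only [Finset.mem_product, Finset.mem_filter, Finset.mem_univ, true_and]
    constructor
    · intro x hx
      simp only [Finset.mem_coe, Finset.mem_toLeft] at hx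
      rcases hA hx with h | h
      · obtain ⟨y, hy, hyx⟩ := h; exact (Sum.inl.inj hyx) ▸ hy
      · obtain ⟨y, -, hyx⟩ := h; exact absurd hyx (by simp)
    · intro x hx
      simp only [Finset.mem_coe, Finset.mem_toRight] at hx
      rcases hA hx with h | h
      · obtain ⟨y, -, hyx⟩ := h; exact absurd hyx (by simp)
      · obtain ⟨y, hy, hyx⟩ := h; exact (Sum.inr.inj hyx) ▸ hy
  · intro p hp
    simp only [Finset.mem_product, Finset.mem_filter, Finset.mem_univ, true_and] at hp
    simp only [Finset.mem_filter, Finset.mem_univ, true_and, sum_ground, coe_disjSum]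
    exact Set.union_subset_union (Set.image_mono hp.1) (Set.image_mono hp.2)
  · intro A _; exact Finset.toLeft_disjSum_toRight
  · intro p _; simp
  · intro A hA
    simp only [Finset.mem_filter, Finset.mem_univ, true_and, sum_ground] at hA
    have hrep : A = A.toLeft.disjSum A.toRight := Finset.toLeft_disjSum_toRight.symm
    have hL : (A.toLeft : Set α) ⊆ M.E := by
      intro x hx
      simp only [Finset.mem_coe, Finset.mem_toLeft] at hx
      rcases hA hx with h | h
      · obtain ⟨y, hy, hyx⟩ := h; exact (Sum.inl.inj hyx) ▸ hy
      · obtain ⟨y, -, hyx⟩ := h; exact absurd hyx (by simp)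
    have hR : (A.toRight : Set β) ⊆ N.E := by
      intro x hx
      simp only [Finset.mem_coe, Finset.mem_toRight] at hx
      rcases hA hx with h | h
      · obtain ⟨y, -, hyx⟩ := h; exact absurd hyx (by simp)
      · obtain ⟨y, hy, hyx⟩ := h; exact (Sum.inr.inj hyx) ▸ hy
    conv_lhs => rw [hrep]
    have hgr : (M.sum N).mrank (M.sum N).E = M.mrank M.E + N.mrank N.E := by
      rw [sum_ground, mrank_sum]
    have hA' : (M.sum N).mrank ((A.toLeft.disjSum A.toRight : Finset (α ⊕ β)) : Set (α ⊕ β))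
        = M.mrank A.toLeft + N.mrank A.toRight := by
      rw [coe_disjSum, mrank_sum]
    rw [hgr, hA', Finset.card_disjSum]
    have h1 : M.mrank (A.toLeft : Set α) ≤ M.mrank M.E := mrank_mono hL
    have h2 : N.mrank (A.toRight : Set β) ≤ N.mrank N.E := mrank_mono hR
    have h3 : M.mrank (A.toLeft : Set α) ≤ A.toLeft.card := by
      simpa using M.mrank_le_ncard (A.toLeft : Set α)
    have h4 : N.mrank (A.toRight : Set β) ≤ A.toRight.card := by
      simpa using N.mrank_le_ncard (A.toRight : Set β)
    rw [show M.mrank M.E + N.mrank N.E - (M.mrank ↑A.toLeft + N.mrank ↑A.toRight)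
        = (M.mrank M.E - M.mrank ↑A.toLeft) + (N.mrank N.E - N.mrank ↑A.toRight) by omega,
      show A.toLeft.card + A.toRight.card - (M.mrank ↑A.toLeft + N.mrank ↑A.toRight)
        = (A.toLeft.card - M.mrank ↑A.toLeft) + (A.toRight.card - N.mrank ↑A.toRight) by omega,
      pow_add, pow_add]
    ring

end Matroid

lemma filter_coe_subset_eq_powerset [Fintype α] (E : Set α) :
    Finset.univ.filter (fun A : Finset α => (A : Set α) ⊆ E) = E.toFinset.powerset := by
  ext A
  simp only [Finset.mem_filter, Finset.mem_univ, true_and, Finset.mem_powerset]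
  rw [← Set.coe_toFinset E, Finset.coe_subset, Set.coe_toFinset]

lemma sum_powerset_union {γ R : Type*} [DecidableEq γ] [AddCommMonoid R] {s t : Finset γ}
    (hst : Disjoint s t) (f : Finset γ → R) :
    ∑ A ∈ (s ∪ t).powerset, f A = ∑ u ∈ s.powerset, ∑ v ∈ t.powerset, f (u ∪ v) := by
  rw [← Finset.sum_product']
  refine Finset.sum_nbij' (fun A => (A ∩ s, A ∩ t)) (fun p => p.1 ∪ p.2) ?_ ?_ ?_ ?_ ?_
  · intro A hA
    simp [Finset.mem_powerset, Finset.inter_subset_right]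
  · intro p hp
    simp only [Finset.mem_product, Finset.mem_powerset] at hp
    exact Finset.mem_powerset.mpr (Finset.union_subset_union hp.1 hp.2)
  · intro A hA
    dsimp only
    rw [← Finset.inter_union_distrib_left, Finset.inter_eq_left.mpr (Finset.mem_powerset.mp hA)]
  · intro p hp
    simp only [Finset.mem_product, Finset.mem_powerset] at hp
    have h1 : (p.1 ∪ p.2) ∩ s = p.1 := by
      rw [Finset.union_inter_distrib_right, Finset.inter_eq_left.mpr hp.1,
        Finset.disjoint_iff_inter_eq_empty.mp (Finset.disjoint_of_subset_left hp.2 hst.symm),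
        Finset.union_empty]
    have h2 : (p.1 ∪ p.2) ∩ t = p.2 := by
      rw [Finset.union_inter_distrib_right, Finset.inter_eq_left.mpr hp.2,
        Finset.disjoint_iff_inter_eq_empty.mp (Finset.disjoint_of_subset_left hp.1 hst),
        Finset.empty_union]
    rw [h1, h2]
  · intro A hA
    dsimp only
    rw [← Finset.inter_union_distrib_left, Finset.inter_eq_left.mpr (Finset.mem_powerset.mp hA)]

lemma aeval_tutte [Fintype α] (M : Matroid α) :
    MvPolynomial.aeval
      (fun i : Fin 2 => if i = 0 then 1 - Polynomial.X else (0 : Polynomial ℤ)) M.tutte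
    = ∑ A ∈ (M.E).toFinset.powerset,
        (-Polynomial.X : Polynomial ℤ) ^ (M.mrank M.E - M.mrank (A : Set α)) *
        (-1 : Polynomial ℤ) ^ (A.card - M.mrank (A : Set α)) := by
  rw [Matroid.tutte, filter_coe_subset_eq_powerset, map_sum]
  refine Finset.sum_congr rfl fun A _ => ?_
  rw [map_mul, map_pow, map_pow, map_sub, map_sub, aeval_X, aeval_X]
  norm_num

lemma tutte_freeOn_unit :
    (Matroid.freeOn (Set.univ : Set Unit)).tutte = X 0 := by
  have hmr : ∀ Y : Set Unit, (Matroid.freeOn (Set.univ : Set Unit)).mrank Y = Y.ncard :=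
    fun Y => (Matroid.freeOn_indep_iff.mpr (Set.subset_univ Y)).mrank_eq
  rw [Matroid.tutte, filter_coe_subset_eq_powerset, Matroid.freeOn_ground]
  have hU : ∀ (inst : Fintype ↥(Set.univ : Set Unit)),
      @Set.toFinset _ _ inst = Finset.univ := fun inst => by ext x; simp
  rw [hU, Finset.powerset_univ]
  have huniv : (Finset.univ : Finset (Finset Unit)) = {∅, {()}} := by decide
  rw [huniv, Finset.sum_insert (by decide), Finset.sum_singleton]
  simp only [hmr]
  rw [Set.ncard_univ]
  norm_num [Set.ncard_coe_finset]

/-- `M_n = C_n ⊕ M₀` and `M'_n = P(C_n, M₀) ⊕ S` have equal characteristic polynomials: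
`T_{M_n}(1 - t, 0) = T_{M'_n}(1 - t, 0)`. -/
theorem charpoly_eq_of_parallelConnection [Fintype α] (n : ℕ) (hn : 2 ≤ n) (M₀ Cn P : Matroid α)
    (hsimple : M₀.IsSimple) (ε₀ : α) (hε : ε₀ ∈ M₀.E)
    (hCncirc : ∀ C, Cn.IsCirc C ↔ C = Cn.E) (hCncard : Cn.E.ncard = n)
    (hmeet : Cn.E ∩ M₀.E = {ε₀})
    (hPE : P.E = Cn.E ∪ M₀.E)
    (hPcirc : ∀ C, P.IsCirc C ↔ (Cn.IsCirc C ∨ M₀.IsCirc C ∨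
      ∃ C₁ C₂, Cn.IsCirc C₁ ∧ M₀.IsCirc C₂ ∧ ε₀ ∈ C₁ ∧ ε₀ ∈ C₂ ∧
        C = (C₁ \ {ε₀}) ∪ (C₂ \ {ε₀}))) :
    MvPolynomial.aeval
        (fun i : Fin 2 => if i = 0 then 1 - Polynomial.X else (0 : Polynomial ℤ))
        (Cn.sum M₀).tutte =
      MvPolynomial.aeval
        (fun i : Fin 2 => if i = 0 then 1 - Polynomial.X else (0 : Polynomial ℤ))
        (P.sum (Matroid.freeOn (Set.univ : Set Unit))).tutte := by
  classical
  rw [Matroid.tutte_sum, Matroid.tutte_sum, map_mul, map_mul, tutte_freeOn_unit]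
  have hXS : (MvPolynomial.aeval
      (fun i : Fin 2 => if i = 0 then 1 - Polynomial.X else (0 : Polynomial ℤ)))
      (X 0 : MvPolynomial (Fin 2) ℤ) = 1 - Polynomial.X := by simp
  rw [hXS]
  -- basic facts
  have hεb : ε₀ ∈ Cn.E ∩ M₀.E := by rw [hmeet]; exact Set.mem_singleton ε₀
  have hε1 : ε₀ ∈ Cn.E := hεb.1
  have hE1fin : Cn.E.Finite := Set.toFinite _
  have hC : Cn.IsCirc Cn.E := (hCncirc Cn.E).mpr rfl
  have hCnind : ∀ S, S ⊂ Cn.E → Cn.Indep S := fun S h => hC.2.2 S h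
  have hdisjE : ∀ x, x ∈ Cn.E \ {ε₀} → x ∉ M₀.E := by
    intro x hx hxE0
    have hxm : x ∈ Cn.E ∩ M₀.E := ⟨hx.1, hxE0⟩
    rw [hmeet] at hxm
    exact hx.2 hxm
  have hc1 : (Cn.E \ {ε₀}).ncard = n - 1 := by
    rw [Set.ncard_diff_singleton_of_mem hε1, hCncard]
  have hrkE1 : Cn.mrank Cn.E = n - 1 := by
    apply le_antisymm
    · refine Matroid.mrank_le fun I hI hIE => ?_
      have hne : I ≠ Cn.E := by rintro rfl; exact hC.2.1 hI
      have hlt : I.ncard < n := hCncard ▸ Set.ncard_lt_ncard (hIE.ssubset_of_ne hne) hE1fin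
      omega
    · have h1 : Cn.Indep (Cn.E \ {ε₀}) := hCnind _ (Set.sdiff_singleton_ssubset.mpr hε1)
      have h2 := Matroid.ncard_le_mrank h1 Set.diff_subset
      rwa [hc1] at h2
  -- P circuits
  have hPcirc' : ∀ C, P.IsCirc C ↔ (C = Cn.E ∨ M₀.IsCirc C ∨
      ∃ C₂, M₀.IsCirc C₂ ∧ ε₀ ∈ C₂ ∧ C = (Cn.E \ {ε₀}) ∪ (C₂ \ {ε₀})) := by
    intro C
    rw [hPcirc]
    constructor
    · rintro (h | h | ⟨C₁, C₂, h1, h2, h3, h4, rfl⟩)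
      · exact Or.inl ((hCncirc C).mp h)
      · exact Or.inr (Or.inl h)
      · exact Or.inr (Or.inr ⟨C₂, h2, h4, by rw [(hCncirc C₁).mp h1]⟩)
    · rintro (rfl | h | ⟨C₂, h2, h4, rfl⟩)
      · exact Or.inl hC
      · exact Or.inr (Or.inl h)
      · exact Or.inr (Or.inr ⟨Cn.E, C₂, hC, h2, hε1, h4, rfl⟩)
  have hPind : ∀ I : Set α, P.Indep I ↔ (I ⊆ Cn.E ∪ M₀.E ∧ M₀.Indep (I ∩ M₀.E) ∧
      ¬ (Cn.E ⊆ I) ∧ ∀ C₂, M₀.IsCirc C₂ → ε₀ ∈ C₂ →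
        ¬ ((Cn.E \ {ε₀}) ∪ (C₂ \ {ε₀}) ⊆ I)) := by
    intro I
    rw [Matroid.indep_iff_circuit, hPE]
    constructor
    · rintro ⟨hIE, hcirc⟩
      refine ⟨hIE, ?_, fun h => hcirc _ ((hPcirc' Cn.E).mpr (Or.inl rfl)) h, ?_⟩
      · rw [Matroid.indep_iff_circuit]
        refine ⟨Set.inter_subset_right, fun C hCc hCI => ?_⟩
        exact hcirc C ((hPcirc' C).mpr (Or.inr (Or.inl hCc)))
          (hCI.trans Set.inter_subset_left)
      · intro C₂ h1 h2 hsub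
        exact hcirc _ ((hPcirc' _).mpr (Or.inr (Or.inr ⟨C₂, h1, h2, rfl⟩))) hsub
    · rintro ⟨hIE, hM, hCne, hmix⟩
      refine ⟨hIE, fun C hCc hCI => ?_⟩
      rcases (hPcirc' C).mp hCc with rfl | hc | ⟨C₂, h1, h2, rfl⟩
      · exact hCne hCI
      · exact hc.2.1 (hM.subset (Set.subset_inter hCI hc.1))
      · exact hmix C₂ h1 h2 hCI
  -- rank of P on sets avoiding the cycle
  have hL1 : ∀ A : Set α, A ⊆ Cn.E ∪ M₀.E → ¬ (Cn.E \ {ε₀} ⊆ A) →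
      P.mrank A = (A \ M₀.E).ncard + M₀.mrank (A ∩ M₀.E) := by
    intro A hAE hA2
    apply le_antisymm
    · refine Matroid.mrank_le fun I hI hIA => ?_
      obtain ⟨-, hIM, -, -⟩ := (hPind I).mp hI
      have hsplit : (I ∩ M₀.E).ncard + (I \ M₀.E).ncard = I.ncard :=
        Set.ncard_inter_add_ncard_diff_eq_ncard I M₀.E (Set.toFinite _)
      have h1 : (I \ M₀.E).ncard ≤ (A \ M₀.E).ncard :=
        Set.ncard_le_ncard (Set.diff_subset_diff_left hIA) (Set.toFinite _)
      have h2 : (I ∩ M₀.E).ncard ≤ M₀.mrank (A ∩ M₀.E) :=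
        Matroid.ncard_le_mrank hIM (Set.inter_subset_inter_left _ hIA)
      omega
    · obtain ⟨J, hJ, hJA, hJc⟩ := M₀.exists_mrank (A ∩ M₀.E)
      have hJE0 : J ⊆ M₀.E := hJA.trans Set.inter_subset_right
      have hIE0 : ((A \ M₀.E) ∪ J) ∩ M₀.E = J := by
        ext x
        constructor
        · rintro ⟨hx | hx, hx0⟩
          · exact absurd hx0 hx.2
          · exact hx
        · exact fun hx => ⟨Or.inr hx, hJE0 hx⟩
      have hE1A : ¬ (Cn.E \ {ε₀} ⊆ (A \ M₀.E) ∪ J) := by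
        intro hsub
        refine hA2 fun x hx => ?_
        rcases hsub hx with h | h
        · exact h.1
        · exact absurd (hJE0 h) (hdisjE x hx)
      have hIind : P.Indep ((A \ M₀.E) ∪ J) := by
        rw [hPind]
        refine ⟨Set.union_subset (Set.diff_subset.trans hAE)
          (fun x hx => Or.inr (hJE0 hx)), ?_, ?_, ?_⟩
        · rw [hIE0]; exact hJ
        · exact fun hsub => hE1A (fun x hx => hsub hx.1)
        · exact fun C₂ _ _ hsub => hE1A (fun x hx => hsub (Or.inl hx))
      have hcard : ((A \ M₀.E) ∪ J).ncard = (A \ M₀.E).ncard + J.ncard := by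
        refine Set.ncard_union_eq ?_ (Set.toFinite _) (Set.toFinite _)
        exact Set.disjoint_left.mpr fun x hx hxJ => hx.2 (hJE0 hxJ)
      have hfin := Matroid.ncard_le_mrank hIind
        (Set.union_subset Set.diff_subset (hJA.trans Set.inter_subset_left))
      rwa [hcard, hJc] at hfin
  -- rank of P on sets containing the whole open cycle
  have hL2 : ∀ A0 : Set α, A0 ⊆ M₀.E →
      P.mrank ((Cn.E \ {ε₀}) ∪ A0) = (n - 2) + M₀.mrank (A0 ∪ {ε₀}) := by
    intro A0 hA0
    have hA0ε : A0 ∪ {ε₀} ⊆ M₀.E := Set.union_subset hA0 (by simpa using hε)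
    apply le_antisymm
    · refine Matroid.mrank_le fun I hI hIA => ?_
      obtain ⟨hIE, hIM, hICn, hImix⟩ := (hPind I).mp hI
      have hId : I \ M₀.E ⊆ Cn.E \ {ε₀} := by
        intro x hx
        rcases hIA hx.1 with h | h
        · exact h
        · exact absurd (hA0 h) hx.2
      have hIi : I ∩ M₀.E ⊆ A0 := by
        intro x hx
        rcases hIA hx.1 with h | h
        · exact absurd hx.2 (hdisjE x h)
        · exact h
      have hIsplit : (I ∩ M₀.E).ncard + (I \ M₀.E).ncard = I.ncard :=
        Set.ncard_inter_add_ncard_diff_eq_ncard I M₀.E (Set.toFinite _)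
      by_cases hcase : Cn.E \ {ε₀} ⊆ I
      · have hε₀I : ε₀ ∉ I := by
          intro hmem
          refine hICn (fun x hx => ?_)
          by_cases hxe : x = ε₀
          · exact hxe ▸ hmem
          · exact hcase ⟨hx, hxe⟩
        have hind : M₀.Indep ((I ∩ M₀.E) ∪ {ε₀}) := by
          rw [Matroid.indep_iff_circuit]
          refine ⟨Set.union_subset Set.inter_subset_right (by simpa using hε), ?_⟩
          intro C hCc hCsub
          by_cases hεC : ε₀ ∈ C
          · refine hImix C hCc hεC ?_
            refine Set.union_subset (fun x hx => hcase hx) ?_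
            intro x hx
            rcases hCsub hx.1 with h | h
            · exact h.1
            · exact absurd h hx.2
          · have hCI : C ⊆ I ∩ M₀.E := by
              intro x hx
              rcases hCsub hx with h | h
              · exact h
              · exact absurd (h ▸ hx) hεC
            exact hCc.2.1 (hIM.subset hCI)
        have h5 := Matroid.ncard_le_mrank hind
          (show (I ∩ M₀.E) ∪ {ε₀} ⊆ A0 ∪ {ε₀} from
            Set.union_subset (fun x hx => Or.inl (hIi hx)) Set.subset_union_right)
        have h6 : ((I ∩ M₀.E) ∪ {ε₀}).ncard = (I ∩ M₀.E).ncard + 1 := by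
          rw [Set.union_singleton,
            Set.ncard_insert_of_notMem (fun h => hε₀I h.1) (Set.toFinite _)]
        have h7 : (I \ M₀.E).ncard ≤ n - 1 :=
          hc1 ▸ Set.ncard_le_ncard hId (Set.toFinite _)
        omega
      · obtain ⟨e, he, heI⟩ := Set.not_subset.mp hcase
        have hsub : I \ M₀.E ⊆ (Cn.E \ {ε₀}) \ {e} :=
          fun x hx => ⟨hId hx, fun hxe => heI (Set.mem_singleton_iff.mp hxe ▸ hx.1)⟩
        have h9 := Set.ncard_diff_singleton_of_mem he
        have h7 : (I \ M₀.E).ncard ≤ ((Cn.E \ {ε₀}) \ {e}).ncard :=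
          Set.ncard_le_ncard hsub (Set.toFinite _)
        have h8 : (I ∩ M₀.E).ncard ≤ M₀.mrank (A0 ∪ {ε₀}) :=
          Matroid.ncard_le_mrank hIM (hIi.trans Set.subset_union_left)
        omega
    · obtain ⟨J, hJ, hJA, hJc⟩ := M₀.exists_mrank (A0 ∪ {ε₀})
      have hJE0 : J ⊆ M₀.E := hJA.trans hA0ε
      by_cases hεJ : ε₀ ∈ J
      · have hJd : J \ {ε₀} ⊆ A0 := by
          intro x hx
          rcases hJA hx.1 with h | h
          · exact h
          · exact absurd h hx.2
        have hIint : ((Cn.E \ {ε₀}) ∪ (J \ {ε₀})) ∩ M₀.E = J \ {ε₀} := by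
          ext x
          constructor
          · rintro ⟨hx | hx, hx0⟩
            · exact absurd hx0 (hdisjE x hx)
            · exact hx
          · exact fun hx => ⟨Or.inr hx, hJE0 hx.1⟩
        have hind : P.Indep ((Cn.E \ {ε₀}) ∪ (J \ {ε₀})) := by
          rw [hPind]
          refine ⟨Set.union_subset (fun x hx => Or.inl hx.1)
            (fun x hx => Or.inr (hJE0 hx.1)), ?_, ?_, ?_⟩
          · rw [hIint]; exact hJ.subset Set.diff_subset
          · intro hsub
            rcases hsub hε1 with h | h
            · exact h.2 rfl
            · exact h.2 rfl
          · intro C₂ h1 h2 hsub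
            have hC2I : C₂ \ {ε₀} ⊆ J \ {ε₀} := by
              intro x hx
              have hxI := hsub (Or.inr hx)
              have hx0 : x ∈ M₀.E := h1.1 hx.1
              have : x ∈ ((Cn.E \ {ε₀}) ∪ (J \ {ε₀})) ∩ M₀.E := ⟨hxI, hx0⟩
              rwa [hIint] at this
            have hC2J : C₂ ⊆ J := by
              intro x hx
              by_cases hxe : x = ε₀
              · exact hxe ▸ hεJ
              · exact (hC2I ⟨hx, hxe⟩).1
            exact h1.2.1 (hJ.subset hC2J)
        have hcard : ((Cn.E \ {ε₀}) ∪ (J \ {ε₀})).ncard = (n - 1) + (J.ncard - 1) := by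
          rw [Set.ncard_union_eq
            (Set.disjoint_left.mpr fun x hx hxJ => hdisjE x hx (hJE0 hxJ.1))
            (Set.toFinite _) (Set.toFinite _), hc1,
            Set.ncard_diff_singleton_of_mem hεJ]
        have hJ1 : 1 ≤ J.ncard := by
          have : J.Nonempty := ⟨ε₀, hεJ⟩
          have := (Set.ncard_pos (Set.toFinite _)).mpr this
          omega
        have hres := Matroid.ncard_le_mrank hind
          (show (Cn.E \ {ε₀}) ∪ (J \ {ε₀}) ⊆ (Cn.E \ {ε₀}) ∪ A0 from
            Set.union_subset Set.subset_union_left (fun x hx => Or.inr (hJd hx)))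
        rw [hcard, hJc] at hres
        omega
      · have hJA0 : J ⊆ A0 := by
          intro x hx
          rcases hJA hx with h | h
          · exact h
          · exact absurd h (by rintro rfl; exact hεJ hx)
        obtain ⟨e, he1, hee⟩ := Set.exists_ne_of_one_lt_ncard
          (by omega : 1 < Cn.E.ncard) ε₀
        have heE : e ∈ Cn.E \ {ε₀} := ⟨he1, hee⟩
        have hIint : (((Cn.E \ {ε₀}) \ {e}) ∪ J) ∩ M₀.E = J := by
          ext x
          constructor
          · rintro ⟨hx | hx, hx0⟩
            · exact absurd hx0 (hdisjE x hx.1)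
            · exact hx
          · exact fun hx => ⟨Or.inr hx, hJE0 hx⟩
        have heI : e ∉ ((Cn.E \ {ε₀}) \ {e}) ∪ J := by
          rintro (h | h)
          · exact h.2 rfl
          · exact hdisjE e heE (hJE0 h)
        have hind : P.Indep (((Cn.E \ {ε₀}) \ {e}) ∪ J) := by
          rw [hPind]
          refine ⟨Set.union_subset (fun x hx => Or.inl hx.1.1)
            (fun x hx => Or.inr (hJE0 hx)), ?_, ?_, ?_⟩
          · rw [hIint]; exact hJ
          · exact fun hsub => heI (hsub he1)
          · exact fun C₂ _ _ hsub => heI (hsub (Or.inl heE))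
        have hcard : (((Cn.E \ {ε₀}) \ {e}) ∪ J).ncard = (n - 2) + J.ncard := by
          rw [Set.ncard_union_eq
            (Set.disjoint_left.mpr fun x hx hxJ => hdisjE x hx.1 (hJE0 hxJ))
            (Set.toFinite _) (Set.toFinite _),
            Set.ncard_diff_singleton_of_mem heE, hc1]
          omega
        have hres := Matroid.ncard_le_mrank hind
          (show ((Cn.E \ {ε₀}) \ {e}) ∪ J ⊆ (Cn.E \ {ε₀}) ∪ A0 from
            Set.union_subset (fun x hx => Or.inl hx.1) (fun x hx => Or.inr (hJA0 hx)))
        rw [hcard, hJc] at hres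
        omega
  have hPE' : P.E = (Cn.E \ {ε₀}) ∪ M₀.E := by
    rw [hPE]
    ext x
    constructor
    · rintro (hx | hx)
      · by_cases hxε : x = ε₀
        · exact Or.inr (hxε ▸ hε)
        · exact Or.inl ⟨hx, hxε⟩
      · exact Or.inr hx
    · rintro (hx | hx)
      · exact Or.inl hx.1
      · exact Or.inr hx
  have hRP : P.mrank P.E = n - 2 + M₀.mrank M₀.E := by
    have hU : M₀.E ∪ {ε₀} = M₀.E :=
      Set.union_eq_self_of_subset_right (by simpa using hε)
    rw [hPE', hL2 M₀.E subset_rfl, hU]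
  -- Finset bookkeeping
  rw [aeval_tutte, aeval_tutte, aeval_tutte]
  have hcardE1f : Cn.E.toFinset.card = n := by
    rw [← Set.ncard_eq_toFinset_card']; exact hCncard
  have hε₀mem : ε₀ ∈ Cn.E.toFinset := Set.mem_toFinset.mpr hε1
  have hein : Cn.E.toFinset = insert ε₀ (Cn.E.toFinset.erase ε₀) :=
    (Finset.insert_erase hε₀mem).symm
  have hce1f : ((Cn.E.toFinset.erase ε₀ : Finset α) : Set α) = Cn.E \ {ε₀} := by
    rw [Finset.coe_erase, Set.coe_toFinset]
  have hcarde1f : (Cn.E.toFinset.erase ε₀).card = n - 1 := by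
    rw [Finset.card_erase_of_mem hε₀mem, hcardE1f]
  -- the cycle factor
  have hCnsum : (∑ A ∈ Cn.E.toFinset.powerset,
        (-Polynomial.X : Polynomial ℤ) ^ (Cn.mrank Cn.E - Cn.mrank (A : Set α)) *
        (-1 : Polynomial ℤ) ^ (A.card - Cn.mrank (A : Set α)))
      = ∑ B ∈ (Cn.E.toFinset.erase ε₀).powerset, (1 - Polynomial.X) *
          (if B = Cn.E.toFinset.erase ε₀ then 0
            else (-Polynomial.X : Polynomial ℤ) ^ (n - 2 - B.card)) := by
    conv_lhs => rw [hein]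
    rw [Finset.sum_powerset_insert (Finset.notMem_erase _ _), ← Finset.sum_add_distrib]
    refine Finset.sum_congr rfl fun B hB => ?_
    rw [Finset.mem_powerset] at hB
    have hBsub : (B : Set α) ⊆ Cn.E \ {ε₀} := by
      rw [← hce1f]; exact Finset.coe_subset.mpr hB
    have hε₀B : ε₀ ∉ B := fun h => (hBsub h).2 rfl
    by_cases hBe : B = Cn.E.toFinset.erase ε₀
    · have hBset : (B : Set α) = Cn.E \ {ε₀} := by rw [hBe, hce1f]
      have hBrank : Cn.mrank (B : Set α) = n - 1 := by
        rw [hBset, (hCnind _ (Set.sdiff_singleton_ssubset.mpr hε1)).mrank_eq, hc1]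
      have hBcard : B.card = n - 1 := by rw [hBe, hcarde1f]
      have hiBset : ((insert ε₀ B : Finset α) : Set α) = Cn.E := by
        rw [Finset.coe_insert, hBset, Set.insert_diff_singleton,
          Set.insert_eq_self.mpr hε1]
      have hiBrank : Cn.mrank ((insert ε₀ B : Finset α) : Set α) = n - 1 := by
        rw [hiBset, hrkE1]
      have hiBcard : (insert ε₀ B).card = n := by
        rw [Finset.card_insert_of_notMem hε₀B, hBcard]; omega
      rw [if_pos hBe, hrkE1, hBrank, hiBrank, hBcard, hiBcard,
        show n - 1 - (n - 1) = 0 by omega, show n - (n - 1) = 1 by omega]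
      ring
    · have hBss' : B ⊂ Cn.E.toFinset.erase ε₀ := lt_of_le_of_ne hB hBe
      have hBss : (B : Set α) ⊂ Cn.E :=
        lt_of_le_of_lt hBsub (Set.sdiff_singleton_ssubset.mpr hε1)
      have hBrank : Cn.mrank (B : Set α) = B.card := by
        rw [(hCnind _ hBss).mrank_eq, Set.ncard_coe_finset]
      have hBlt : B.card ≤ n - 2 := by
        have := Finset.card_lt_card hBss'
        omega
      obtain ⟨x, hxe1f, hxB⟩ := Finset.exists_of_ssubset hBss'
      have hxE : x ∈ Cn.E := Set.mem_toFinset.mp (Finset.mem_of_mem_erase hxe1f)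
      have hxne : x ≠ ε₀ := Finset.ne_of_mem_erase hxe1f
      have hiBss : insert ε₀ (B : Set α) ⊂ Cn.E := by
        refine ⟨Set.insert_subset hε1 (hBsub.trans Set.diff_subset), fun hsup => ?_⟩
        rcases Set.mem_insert_iff.mp (hsup hxE) with h | h
        · exact hxne h
        · exact hxB (Finset.mem_coe.mp h)
      have hiBrank : Cn.mrank ((insert ε₀ B : Finset α) : Set α) = B.card + 1 := by
        rw [Finset.coe_insert, (hCnind _ hiBss).mrank_eq,
          Set.ncard_insert_of_notMem (fun h => hε₀B (Finset.mem_coe.mp h))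
            (Set.toFinite _), Set.ncard_coe_finset]
      have hiBcard : (insert ε₀ B).card = B.card + 1 :=
        Finset.card_insert_of_notMem hε₀B
      rw [if_neg hBe, hrkE1, hBrank, hiBrank, hiBcard,
        show B.card - B.card = 0 by omega,
        show B.card + 1 - (B.card + 1) = 0 by omega,
        show n - 1 - B.card = (n - 2 - B.card) + 1 by omega,
        show n - 1 - (B.card + 1) = n - 2 - B.card by omega, pow_succ]
      ring
  -- the parallel-connection factor
  have hPfin : P.E.toFinset = (Cn.E.toFinset.erase ε₀) ∪ M₀.E.toFinset := by
    ext x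
    simp only [Set.mem_toFinset, Finset.mem_union, Finset.mem_erase, hPE',
      Set.mem_union, Set.mem_diff, Set.mem_singleton_iff]
    tauto
  have hdisjf : Disjoint (Cn.E.toFinset.erase ε₀) M₀.E.toFinset := by
    rw [Finset.disjoint_left]
    intro x hx hx0
    exact hdisjE x ⟨Set.mem_toFinset.mp (Finset.mem_of_mem_erase hx),
      Finset.ne_of_mem_erase hx⟩ (Set.mem_toFinset.mp hx0)
  have hε₀mem0 : ε₀ ∈ M₀.E.toFinset := Set.mem_toFinset.mpr hε
  have hein0 : M₀.E.toFinset = insert ε₀ (M₀.E.toFinset.erase ε₀) :=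
    (Finset.insert_erase hε₀mem0).symm
  have hPsum : (∑ A ∈ P.E.toFinset.powerset,
        (-Polynomial.X : Polynomial ℤ) ^ (P.mrank P.E - P.mrank (A : Set α)) *
        (-1 : Polynomial ℤ) ^ (A.card - P.mrank (A : Set α)))
      = (∑ B ∈ (Cn.E.toFinset.erase ε₀).powerset,
          (if B = Cn.E.toFinset.erase ε₀ then 0
            else (-Polynomial.X : Polynomial ℤ) ^ (n - 2 - B.card))) *
        (∑ A ∈ M₀.E.toFinset.powerset,
          (-Polynomial.X : Polynomial ℤ) ^ (M₀.mrank M₀.E - M₀.mrank (A : Set α)) *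
          (-1 : Polynomial ℤ) ^ (A.card - M₀.mrank (A : Set α))) := by
    rw [hPfin, sum_powerset_union hdisjf, Finset.sum_mul]
    refine Finset.sum_congr rfl fun u hu => ?_
    rw [Finset.mem_powerset] at hu
    have husub : (u : Set α) ⊆ Cn.E \ {ε₀} := by
      rw [← hce1f]; exact Finset.coe_subset.mpr hu
    by_cases hue : u = Cn.E.toFinset.erase ε₀
    · rw [if_pos hue, zero_mul]
      subst hue
      rw [hein0, Finset.sum_powerset_insert (Finset.notMem_erase _ _),
        ← Finset.sum_add_distrib]
      refine Finset.sum_eq_zero fun w hw => ?_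
      rw [Finset.mem_powerset] at hw
      have hwsub : (w : Set α) ⊆ M₀.E \ {ε₀} := by
        rw [← (by rw [Finset.coe_erase, Set.coe_toFinset] :
          ((M₀.E.toFinset.erase ε₀ : Finset α) : Set α) = M₀.E \ {ε₀})]
        exact Finset.coe_subset.mpr hw
      have hwE0 : (w : Set α) ⊆ M₀.E := hwsub.trans Set.diff_subset
      have hε₀w : ε₀ ∉ w := fun h => (hwsub h).2 rfl
      have hs1 : ((Cn.E.toFinset.erase ε₀ ∪ w : Finset α) : Set α)
          = (Cn.E \ {ε₀}) ∪ (w : Set α) := by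
        rw [Finset.coe_union, hce1f]
      have hs2 : ((Cn.E.toFinset.erase ε₀ ∪ insert ε₀ w : Finset α) : Set α)
          = (Cn.E \ {ε₀}) ∪ insert ε₀ (w : Set α) := by
        rw [Finset.coe_union, hce1f, Finset.coe_insert]
      have hr1 : P.mrank ((Cn.E.toFinset.erase ε₀ ∪ w : Finset α) : Set α)
          = n - 2 + M₀.mrank (insert ε₀ (w : Set α)) := by
        rw [hs1, hL2 _ hwE0, Set.union_singleton]
      have hr2 : P.mrank ((Cn.E.toFinset.erase ε₀ ∪ insert ε₀ w : Finset α) : Set α)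
          = n - 2 + M₀.mrank (insert ε₀ (w : Set α)) := by
        rw [hs2, hL2 _ (Set.insert_subset hε hwE0), Set.union_singleton,
          Set.insert_idem]
      have hwdisj : Disjoint (Cn.E.toFinset.erase ε₀) w :=
        Finset.disjoint_of_subset_right (hw.trans (Finset.erase_subset _ _)) hdisjf
      have hwdisj' : Disjoint (Cn.E.toFinset.erase ε₀) (insert ε₀ w) := by
        rw [Finset.disjoint_insert_right]
        exact ⟨Finset.notMem_erase _ _, hwdisj⟩
      have hcard1 : (Cn.E.toFinset.erase ε₀ ∪ w).card = (n - 1) + w.card := by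
        rw [Finset.card_union_of_disjoint hwdisj, hcarde1f]
      have hcard2 : (Cn.E.toFinset.erase ε₀ ∪ insert ε₀ w).card
          = (n - 1) + (w.card + 1) := by
        rw [Finset.card_union_of_disjoint hwdisj', hcarde1f,
          Finset.card_insert_of_notMem hε₀w]
      have hrle : M₀.mrank (insert ε₀ (w : Set α)) ≤ M₀.mrank M₀.E :=
        Matroid.mrank_mono (Set.insert_subset hε hwE0)
      have hrlec : M₀.mrank (insert ε₀ (w : Set α)) ≤ w.card + 1 := by
        have := M₀.mrank_le_ncard (insert ε₀ (w : Set α))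
        rwa [Set.ncard_insert_of_notMem (fun h => hε₀w (Finset.mem_coe.mp h))
          (Set.toFinite _), Set.ncard_coe_finset] at this
      rw [hr1, hr2, hRP, hcard1, hcard2,
        show n - 2 + M₀.mrank M₀.E - (n - 2 + M₀.mrank (insert ε₀ (w : Set α)))
          = M₀.mrank M₀.E - M₀.mrank (insert ε₀ (w : Set α)) by omega,
        show (n - 1) + (w.card + 1) - (n - 2 + M₀.mrank (insert ε₀ (w : Set α)))
          = ((n - 1) + w.card - (n - 2 + M₀.mrank (insert ε₀ (w : Set α)))) + 1 by omega,
        pow_succ]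
      ring
    · rw [if_neg hue]
      have huss : u ⊂ Cn.E.toFinset.erase ε₀ := lt_of_le_of_ne hu hue
      have huc : u.card ≤ n - 2 := by
        have := Finset.card_lt_card huss
        omega
      obtain ⟨x, hxe1f, hxu⟩ := Finset.exists_of_ssubset huss
      rw [Finset.mul_sum]
      refine Finset.sum_congr rfl fun v hv => ?_
      rw [Finset.mem_powerset] at hv
      have hvE0 : (v : Set α) ⊆ M₀.E := by
        rw [← Set.coe_toFinset M₀.E]; exact Finset.coe_subset.mpr hv
      have hsA : ((u ∪ v : Finset α) : Set α) = (u : Set α) ∪ (v : Set α) :=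
        Finset.coe_union _ _
      have hnsub : ¬ (Cn.E \ {ε₀} ⊆ (u : Set α) ∪ (v : Set α)) := by
        intro hsub
        have hxE : x ∈ Cn.E \ {ε₀} := by rw [← hce1f]; exact hxe1f
        rcases hsub hxE with h | h
        · exact hxu (Finset.mem_coe.mp h)
        · exact hdisjE x hxE (hvE0 h)
      have hAE : (u : Set α) ∪ (v : Set α) ⊆ Cn.E ∪ M₀.E :=
        Set.union_subset (fun y hy => Or.inl (husub hy).1) (fun y hy => Or.inr (hvE0 hy))
      have hdiff : ((u : Set α) ∪ (v : Set α)) \ M₀.E = (u : Set α) := by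
        ext y
        constructor
        · rintro ⟨hy | hy, hy0⟩
          · exact hy
          · exact absurd (hvE0 hy) hy0
        · exact fun hy => ⟨Or.inl hy, hdisjE y (husub hy)⟩
      have hinter : ((u : Set α) ∪ (v : Set α)) ∩ M₀.E = (v : Set α) := by
        ext y
        constructor
        · rintro ⟨hy | hy, hy0⟩
          · exact absurd hy0 (hdisjE y (husub hy))
          · exact hy
        · exact fun hy => ⟨Or.inr hy, hvE0 hy⟩
      have hrA : P.mrank ((u ∪ v : Finset α) : Set α) = u.card + M₀.mrank (v : Set α) := by
        rw [hsA, hL1 _ hAE hnsub, hdiff, hinter, Set.ncard_coe_finset]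
      have hcardA : (u ∪ v).card = u.card + v.card := by
        rw [Finset.card_union_of_disjoint (hdisjf.mono hu hv)]
      have hrv : M₀.mrank (v : Set α) ≤ M₀.mrank M₀.E := Matroid.mrank_mono hvE0
      have hrvc : M₀.mrank (v : Set α) ≤ v.card := by
        have := M₀.mrank_le_ncard (v : Set α)
        rwa [Set.ncard_coe_finset] at this
      rw [hrA, hcardA, hRP,
        show n - 2 + M₀.mrank M₀.E - (u.card + M₀.mrank (v : Set α))
          = (n - 2 - u.card) + (M₀.mrank M₀.E - M₀.mrank (v : Set α)) by omega,
        show u.card + v.card - (u.card + M₀.mrank (v : Set α))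
          = v.card - M₀.mrank (v : Set α) by omega, pow_add]
      ring
  rw [hCnsum, hPsum, ← Finset.mul_sum]
  ring
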